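/- The map x ↦ x^(ω+2) is a bijection of F. Moreover, for r ∈ F^* and a, b ∈ F, the projective point [1,1,0,0]·M(r;a,b) is of the form [1, x, x, 1] with x ≠ 1 if and only if b = 1 and a^(ω+2) + r^(ω+2) = 1; consequently, for each r ∈ F^* there is a unique a = a(r) ∈ F with a(r)^(ω+2) = 1 + r^(ω+2), this a(r) satisfies a(r) ≠ 1, and [1,1,0,0]·M(r;a(r),1) = [1, a(r), a(r), 1]. -/

import Mathlib

open Matrix

noncomputable section

abbrev F (n : ℕ) : Type := GaloisField 2 (2 * n + 1)

def om (n : ℕ) : ℕ := 2 ^ (n + 1)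

def ff (n : ℕ) (x y : F n) : F n := x ^ (om n + 2) + x * y + y ^ om n

def Mmat (n : ℕ) (r a b : F n) : Matrix (Fin 4) (Fin 4) (F n) :=
  !![1, ff n a b, a, b;
     0, r ^ (om n + 2), 0, 0;
     0, (a ^ (om n + 1) + b) * r, r, a ^ om n * r;
     0, a * r ^ (om n + 1), 0, r ^ (om n + 1)]

def ee (n : ℕ) : ℕ := 2 ^ (2*n) * (2 ^ (2*n+1) - 2 ^ (n+1) + 1)

lemma pow_me (n : ℕ) (x : F n) : x ^ ((om n + 2) * ee n) = x := by
  have hme : (om n + 2) * ee n = (2^(3*n+1)+1)*(2^(2*n+1)-1)+1 := by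
    have h1 : 2^(n+1) ≤ 2^(2*n+1) := Nat.pow_le_pow_right (by norm_num) (by omega)
    have h2 : 1 ≤ 2^(2*n+1) := Nat.one_le_two_pow
    unfold om ee
    zify [h1, h2]
    ring
  rcases eq_or_ne x 0 with rfl | hx
  · refine zero_pow ?_
    have h1 : 0 < ee n := Nat.mul_pos (Nat.pow_pos (by norm_num)) (Nat.succ_pos _)
    positivity
  · haveI : Fintype (F n) := Fintype.ofFinite _
    have hcard : Fintype.card (F n) = 2 ^ (2*n+1) := by
      rw [← Nat.card_eq_fintype_card]; exact GaloisField.card 2 _ (by omega)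
    rw [hme, pow_succ, pow_mul, ← hcard,
      FiniteField.pow_card_sub_one_eq_one _ (pow_ne_zero _ hx), one_mul]

lemma bij (n : ℕ) : Function.Bijective (fun x : F n => x ^ (om n + 2)) := by
  have hl : Function.LeftInverse (fun y : F n => y ^ ee n) (fun x : F n => x ^ (om n + 2)) :=
    fun x => by simp only [← pow_mul]; exact pow_me n x
  have hr : Function.RightInverse (fun y : F n => y ^ ee n) (fun x : F n => x ^ (om n + 2)) :=
    fun x => by simp only [← pow_mul, Nat.mul_comm (ee n)]; exact pow_me n x
  exact ⟨hl.injective, hr.surjective⟩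

lemma vecMul_Mmat (n : ℕ) (r a b : F n) :
    (![1, 1, 0, 0] : Fin 4 → F n) ᵥ* Mmat n r a b
      = ![1, ff n a b + r ^ (om n + 2), a, b] := by
  funext i
  fin_cases i <;>
    simp [Mmat, Matrix.vecMul, dotProduct, Fin.sum_univ_four]

lemma prod_eq (n : ℕ) (r a : F n) (hcond : a ^ (om n + 2) + r ^ (om n + 2) = 1) :
    (![1, 1, 0, 0] : Fin 4 → F n) ᵥ* Mmat n r a 1 = (1 : F n) • ![1, a, a, 1] := by
  have h2 : (2 : F n) = 0 := CharTwo.two_eq_zero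
  rw [vecMul_Mmat, one_smul]
  have hf : ff n a 1 + r ^ (om n + 2) = a := by
    unfold ff
    rw [one_pow, mul_one]
    linear_combination hcond + h2
  rw [hf]

theorem generator_characterisation (n : ℕ) (hn : 1 ≤ n) :
    Function.Bijective (fun x : F n => x ^ (om n + 2)) ∧
    (∀ r : F n, r ≠ 0 → ∀ a b : F n,
      ((∃ x : F n, x ≠ 1 ∧ ∃ t : F n, t ≠ 0 ∧
          (![1, 1, 0, 0] : Fin 4 → F n) ᵥ* Mmat n r a b = t • ![1, x, x, 1]) ↔
        (b = 1 ∧ a ^ (om n + 2) + r ^ (om n + 2) = 1))) ∧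
    (∀ r : F n, r ≠ 0 →
      (∃! a : F n, a ^ (om n + 2) = 1 + r ^ (om n + 2)) ∧
      ∀ a : F n, a ^ (om n + 2) = 1 + r ^ (om n + 2) →
        a ≠ 1 ∧ ∃ t : F n, t ≠ 0 ∧
          (![1, 1, 0, 0] : Fin 4 → F n) ᵥ* Mmat n r a 1 = t • ![1, a, a, 1]) := by
  have h2 : (2 : F n) = 0 := CharTwo.two_eq_zero
  have hane : ∀ r a : F n, r ≠ 0 → a ^ (om n + 2) + r ^ (om n + 2) = 1 → a ≠ 1 := by
    intro r a hr hcond ha1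
    subst ha1
    have hr0 : r ^ (om n + 2) = 0 := by
      linear_combination hcond
    exact hr (pow_eq_zero_iff (by norm_num) |>.mp hr0)
  refine ⟨bij n, ?_, ?_⟩
  · intro r hr a b
    constructor
    · rintro ⟨x, hx, t, ht, heq⟩
      rw [vecMul_Mmat] at heq
      have h0 := congrFun heq 0
      have h1 := congrFun heq 1
      have h2' := congrFun heq 2
      have h3 := congrFun heq 3
      simp [Fin.isValue] at h0 h1 h2' h3
      -- h0 : 1 = t, h3 : b = t, h2' : a = t * x, h1 : ff n a b + r^(om n+2) = t * x
      have ht1 : t = 1 := h0.symm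
      subst ht1
      rw [one_mul] at h1 h2'
      subst h2'
      refine ⟨h3, ?_⟩
      have hb1 : b = 1 := h3
      subst hb1
      unfold ff at h1
      rw [one_pow, mul_one] at h1
      linear_combination h1 - h2
    · rintro ⟨hb, hcond⟩
      subst hb
      exact ⟨a, hane r a hr hcond, 1, one_ne_zero, prod_eq n r a hcond⟩
  · intro r hr
    refine ⟨(bij n).existsUnique _, ?_⟩
    intro a ha
    have hcond : a ^ (om n + 2) + r ^ (om n + 2) = 1 := by
      linear_combination ha + r ^ (om n + 2) * h2
    exact ⟨hane r a hr hcond, 1, one_ne_zero, prod_eq n r a hcond⟩
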